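/- Let H*(E) = ℤ ⊕ ℤω with ω² = 0 denote the cohomology ring of an elliptic curve (exterior part suppressed), and let Λ be a commutative ring (playing the role of the even cohomology of a K3 surface) with a symmetric bilinear pairing ⟨·,·⟩ on a submodule Pic ⊆ Λ and a distinguished point class p with ⟨c, c⟩ defined for c ∈ Pic. For a class ch = (r, ℓ + aω, ℓ'ω + d·p, n·p·ω) in the Künneth decomposition (with r, a, d, n ∈ ℤ, ℓ, ℓ' ∈ Pic), define the transform ψ acting on cohomology by: Poincaré duality on the H*(E)-factor, followed by multiplication by exp(c) for c ∈ Pic, followed by pushforward to a point in the Λ-direction (integration of the Λ-factor against the Mukai vector of the K3, here encoded by ∫_S (x · td_S) with td_S = (1, 0, 2·p)). Then ch₀(ψ) = a(2 + ½⟨c,c⟩) + ⟨c, ℓ'⟩ + n and ch₁(ψ) = [−r(2 + ½⟨c,c⟩) − ⟨ℓ, c⟩ − d]·ω. -/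
import Mathlib


/-! STATEMENT 13: cohomological Fourier–Mukai transform, Lemma 2.4.

We model `H^even(K3, ℚ)` as `ℚ × M × ℚ` (degrees 0, 2, 4) where `M` is the
Picard module with intersection pairing `B`, and `H^even(E)` as a rank-two
module, so a total class is a pair `(part₀, part_ω)`.  The transform `ψ` is
(signed) Poincaré duality in the `ω`-variable, followed by multiplication with
`exp c = (1, c, ½⟨c,c⟩)`, followed by pushforward along the K3 factor against
the Todd class `(1, 0, 2·p)`. -/

section FM

variable {M : Type*} [AddCommGroup M] [Module ℚ M]

/-- Multiplication on the even cohomology `ℚ × M × ℚ` of a K3 surface with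
intersection pairing `B`. -/
def K3mul (B : M →ₗ[ℚ] M →ₗ[ℚ] ℚ) (x y : ℚ × M × ℚ) : ℚ × M × ℚ :=
  (x.1 * y.1, x.1 • y.2.1 + y.1 • x.2.1,
    x.1 * y.2.2 + y.1 * x.2.2 + B x.2.1 y.2.1)

/-- Signed Poincaré duality on the elliptic-curve factor: `x + y·ω ↦ y − x·ω`. -/
def PDE (v : (ℚ × M × ℚ) × (ℚ × M × ℚ)) : (ℚ × M × ℚ) × (ℚ × M × ℚ) :=
  (v.2, -v.1)

/-- Pushforward to a point along the K3 factor, i.e. `x ↦ ∫_S x · td_S` with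
`td_S = (1, 0, 2·p)`. -/
def pushK3 (v : ℚ × M × ℚ) : ℚ := v.2.2 + 2 * v.1

/-- `exp c = 1 + c + ½⟨c,c⟩·p`. -/
def expc (B : M →ₗ[ℚ] M →ₗ[ℚ] ℚ) (c : M) : ℚ × M × ℚ := (1, c, B c c / 2)

/-- The transform `ψ` on cohomology: `(ch₀ ψ, ch₁ ψ)` where `ch₁ ψ` is the
coefficient of `ω`. -/
def psiFM (B : M →ₗ[ℚ] M →ₗ[ℚ] ℚ) (c : M)
    (v : (ℚ × M × ℚ) × (ℚ × M × ℚ)) : ℚ × ℚ :=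
  (pushK3 (K3mul B (PDE v).1 (expc B c)), pushK3 (K3mul B (PDE v).2 (expc B c)))

/-- for `ch = (r, ℓ + aω, ℓ'ω + d·p, n·p·ω)`,
`ch₀(ψ) = a(2 + ½⟨c,c⟩) + ⟨c,ℓ'⟩ + n` and
`ch₁(ψ) = (−r(2 + ½⟨c,c⟩) − ⟨ℓ,c⟩ − d)·ω`. -/
theorem stmt13 (B : M →ₗ[ℚ] M →ₗ[ℚ] ℚ)
    (hsym : ∀ x y : M, B x y = B y x)
    (r a d n : ℤ) (ℓ ℓ' c : M) :
    psiFM B c (((r : ℚ), ℓ, (d : ℚ)), ((a : ℚ), ℓ', (n : ℚ))) =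
      ((a : ℚ) * (2 + B c c / 2) + B c ℓ' + n,
        -((r : ℚ) * (2 + B c c / 2)) - B ℓ c - d) := by
  simp only [psiFM, pushK3, K3mul, PDE, expc, Prod.mk.injEq, Prod.fst_neg, Prod.snd_neg, map_neg, LinearMap.neg_apply]
  constructor
  · rw [hsym ℓ' c]; ring
  · ring

end FM
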